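/- Every bijection of the set of diagonals of a convex m-gon (m ≥ 5) that preserves the crossing relation in both directions is induced by a dihedral symmetry of the m-gon acting on endpoints. -/

import Mathlib

def Pbetween (m : ℕ) (a x b : ZMod m) : Prop :=
  0 < (x - a).val ∧ (x - a).val < (b - a).val

def PIsDiag (m : ℕ) (d : Finset (ZMod m)) : Prop :=
  ∃ a b : ZMod m, d = {a, b} ∧ a ≠ b ∧ a - b ≠ 1 ∧ b - a ≠ 1

def PCross (m : ℕ) (d e : Finset (ZMod m)) : Prop :=
  ∃ a b c d' : ZMod m, d = {a, b} ∧ e = {c, d'} ∧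
    a ≠ b ∧ a ≠ c ∧ a ≠ d' ∧ b ≠ c ∧ b ≠ d' ∧ c ≠ d' ∧
    Xor' (Pbetween m a c b) (Pbetween m a d' b)

section Aux
variable {m : ℕ}

lemma aux_pairEq {α : Type*} [DecidableEq α] {a b c d : α} (hab : a ≠ b)
    (he : ({a,b} : Finset α) = {c,d}) : a = c ∧ b = d ∨ a = d ∧ b = c := by
  have h1 : a ∈ ({c,d} : Finset α) := he ▸ (by simp)
  have h2 : b ∈ ({c,d} : Finset α) := he ▸ (by simp)
  have h3 : c ∈ ({a,b} : Finset α) := he.symm ▸ (by simp)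
  have h4 : d ∈ ({a,b} : Finset α) := he.symm ▸ (by simp)
  simp only [Finset.mem_insert, Finset.mem_singleton] at h1 h2 h3 h4
  rcases h3 with rfl|rfl <;> rcases h4 with rfl|rfl <;> tauto

lemma aux_sub_val [NeZero m] (u v : ZMod m) :
    (u - v).val = if v.val ≤ u.val then u.val - v.val else u.val + m - v.val := by
  split_ifs with h
  · exact ZMod.val_sub h
  · have hv : v ≠ 0 := by
      intro h0; subst h0; simp at h
    have h0 : u - v = u + (-v) := by ring
    rw [h0, ZMod.val_add, ZMod.neg_val, if_neg hv]
    have h1 : u.val < v.val := by omega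
    have h2 : v.val ≤ m := le_of_lt (ZMod.val_lt v)
    have h3 : u.val + (m - v.val) < m := by omega
    rw [Nat.mod_eq_of_lt h3]; omega

lemma aux_val_ne [NeZero m] {u v : ZMod m} (h : u ≠ v) : u.val ≠ v.val :=
  fun hv => h (ZMod.val_injective m hv)

lemma aux_bet_flip (hm : 5 ≤ m) {a b x : ZMod m} (hxa : x ≠ a) (hxb : x ≠ b) (hab : a ≠ b) :
    Pbetween m a x b ↔ ¬ Pbetween m b x a := by
  haveI : NeZero m := ⟨by omega⟩
  unfold Pbetween
  have e1 := aux_sub_val x a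
  have e2 := aux_sub_val b a
  have e3 := aux_sub_val x b
  have e4 := aux_sub_val a b
  have d1 := aux_val_ne hxa
  have d2 := aux_val_ne hxb
  have d3 := aux_val_ne hab
  have l1 := ZMod.val_lt x
  have l2 := ZMod.val_lt a
  have l3 := ZMod.val_lt b
  rw [e1, e2, e3, e4]
  split_ifs <;> omega

lemma aux_xorNN {P Q : Prop} : Xor' (¬P) (¬Q) ↔ Xor' P Q := by unfold Xor' Xor; tauto

lemma aux_xor_comm {P Q : Prop} : Xor' P Q ↔ Xor' Q P := by unfold Xor' Xor; tauto

lemma aux_cross_iff (hm : 5 ≤ m) {a b c d : ZMod m} (hab : a ≠ b) (hcd : c ≠ d) :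
    PCross m {a,b} {c,d} ↔
      (a ≠ c ∧ a ≠ d ∧ b ≠ c ∧ b ≠ d ∧ Xor' (Pbetween m a c b) (Pbetween m a d b)) := by
  constructor
  · rintro ⟨a',b',c',d',h1,h2,hab',hac,had,hbc,hbd,hcd',hx⟩
    rcases aux_pairEq hab h1 with ⟨ha,hb⟩|⟨ha,hb⟩ <;>
      rcases aux_pairEq hcd h2 with ⟨hc,hd⟩|⟨hc,hd⟩ <;> subst ha <;> subst hb <;>
      subst hc <;> subst hd
    · exact ⟨hac, had, hbc, hbd, hx⟩
    · exact ⟨had, hac, hbd, hbc, aux_xor_comm.mp hx⟩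
    · refine ⟨hbc, hbd, hac, had, ?_⟩
      rw [aux_bet_flip hm (Ne.symm hac) (Ne.symm hbc) hab'] at hx
      rw [aux_bet_flip hm (Ne.symm had) (Ne.symm hbd) hab'] at hx
      exact aux_xorNN.mp hx
    · refine ⟨hbd, hbc, had, hac, ?_⟩
      rw [aux_bet_flip hm (Ne.symm hac) (Ne.symm hbc) hab'] at hx
      rw [aux_bet_flip hm (Ne.symm had) (Ne.symm hbd) hab'] at hx
      exact aux_xor_comm.mp (aux_xorNN.mp hx)
  · rintro ⟨hac,had,hbc,hbd,hx⟩
    exact ⟨a,b,c,d,rfl,rfl,hab,hac,had,hbc,hbd,hcd,hx⟩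

end Aux
section Aux2
variable {m : ℕ}

def auxEar (c : ZMod m) : Finset (ZMod m) := {c, c + 2}

lemma aux_cast_ne_zero (hm : 5 ≤ m) {k : ℕ} (h0 : 0 < k) (hk : k < m) : (k : ZMod m) ≠ 0 := by
  haveI : NeZero m := ⟨by omega⟩
  intro h
  have h2 := ZMod.val_natCast (n := m) k
  rw [h, Nat.mod_eq_of_lt hk] at h2
  simp at h2; omega

lemma aux_val_one (hm : 5 ≤ m) : (1 : ZMod m).val = 1 := by
  haveI : Fact (1 < m) := ⟨by omega⟩
  exact ZMod.val_one m

lemma aux_val_two (hm : 5 ≤ m) : (2 : ZMod m).val = 2 := by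
  have h : ((2:ℕ) : ZMod m) = 2 := by push_cast; ring
  rw [← h, ZMod.val_natCast, Nat.mod_eq_of_lt (by omega)]

lemma aux_bet_ear (hm : 5 ≤ m) (c x : ZMod m) : Pbetween m c x (c+2) ↔ x = c + 1 := by
  haveI : NeZero m := ⟨by omega⟩
  unfold Pbetween
  rw [show c+2-c = (2:ZMod m) by ring, aux_val_two hm]
  constructor
  · rintro ⟨h0, h1⟩
    have hv : (x - c).val = 1 := by omega
    have h2 : x - c = 1 := ZMod.val_injective m (by rw [hv, aux_val_one hm])
    have := eq_add_of_sub_eq h2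
    rw [this]; ring
  · rintro rfl
    rw [show c+1-c = (1:ZMod m) by ring, aux_val_one hm]; omega

lemma aux_ear_cross (hm : 5 ≤ m) {c x y : ZMod m} (hxy : x ≠ y) :
    PCross m (auxEar c) {x,y} ↔
      (c ≠ x ∧ c ≠ y ∧ c+2 ≠ x ∧ c+2 ≠ y ∧ (x = c+1 ∨ y = c+1)) := by
  have hc2 : c ≠ c + 2 := fun h =>
    aux_cast_ne_zero hm (k := 2) (by norm_num) (by omega) (by push_cast; linear_combination - h)
  rw [show auxEar c = {c, c+2} from rfl, aux_cross_iff hm hc2 hxy,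
    aux_bet_ear hm, aux_bet_ear hm]
  have hne : ¬(x = c+1 ∧ y = c+1) := fun ⟨h1,h2⟩ => hxy (h1.trans h2.symm)
  unfold Xor' Xor; tauto

lemma aux_ear_diag (hm : 5 ≤ m) (c : ZMod m) : PIsDiag m (auxEar c) := by
  refine ⟨c, c+2, rfl, ?_, ?_, ?_⟩
  · exact fun h => aux_cast_ne_zero hm (k := 2) (by norm_num) (by omega) (by push_cast; linear_combination - h)
  · intro h
    exact aux_cast_ne_zero hm (k := 3) (by norm_num) (by omega) (by push_cast; linear_combination - h)
  · intro h
    exact aux_cast_ne_zero hm (k := 1) (by norm_num) (by omega) (by push_cast; linear_combination h)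

lemma aux_ear_unique (hm : 5 ≤ m) {c d : ZMod m} (h : auxEar c = auxEar (m := m) d) : c = d := by
  have hc2 : c ≠ c + 2 := fun h =>
    aux_cast_ne_zero hm (k := 2) (by norm_num) (by omega) (by push_cast; linear_combination - h)
  rcases aux_pairEq hc2 h with ⟨h1, _⟩ | ⟨h1, h2⟩
  · exact h1
  · exfalso
    exact aux_cast_ne_zero hm (k := 4) (by norm_num) (by omega)
      (by push_cast; linear_combination h2 - h1)

lemma aux_ear_cross_ear (hm : 5 ≤ m) (c d : ZMod m) :
    PCross m (auxEar c) (auxEar d) ↔ (d = c + 1 ∨ d = c - 1) := by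
  have hd2 : d ≠ d + 2 := fun h =>
    aux_cast_ne_zero hm (k := 2) (by norm_num) (by omega) (by push_cast; linear_combination - h)
  rw [show auxEar d = {d, d+2} from rfl, aux_ear_cross hm hd2]
  constructor
  · rintro ⟨h1, h2, h3, h4, h5 | h5⟩
    · exact Or.inl h5
    · right; linear_combination h5
  · rintro (rfl | rfl)
    · refine ⟨?_, ?_, ?_, ?_, Or.inl rfl⟩
      · exact fun h => aux_cast_ne_zero hm (k := 1) (by norm_num) (by omega) (by push_cast; linear_combination - h)
      · exact fun h => aux_cast_ne_zero hm (k := 3) (by norm_num) (by omega) (by push_cast; linear_combination - h)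
      · exact fun h => aux_cast_ne_zero hm (k := 1) (by norm_num) (by omega) (by push_cast; linear_combination h)
      · exact fun h => aux_cast_ne_zero hm (k := 1) (by norm_num) (by omega) (by push_cast; linear_combination - h)
    · refine ⟨?_, ?_, ?_, ?_, Or.inr (by ring)⟩
      · exact fun h => aux_cast_ne_zero hm (k := 1) (by norm_num) (by omega) (by push_cast; linear_combination h)
      · exact fun h => aux_cast_ne_zero hm (k := 1) (by norm_num) (by omega) (by push_cast; linear_combination - h)
      · exact fun h => aux_cast_ne_zero hm (k := 3) (by norm_num) (by omega) (by push_cast; linear_combination h)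
      · exact fun h => aux_cast_ne_zero hm (k := 1) (by norm_num) (by omega) (by push_cast; linear_combination h)

lemma aux_diag_cross_ear (hm : 5 ≤ m) {a b : ZMod m} (hab : a ≠ b)
    (h1 : a - b ≠ 1) (h2 : b - a ≠ 1) (c : ZMod m) :
    PCross m (auxEar c) {a, b} ↔ (c = a - 1 ∨ c = b - 1) := by
  rw [aux_ear_cross hm hab]
  constructor
  · rintro ⟨_, _, _, _, h5 | h5⟩
    · left; linear_combination - h5
    · right; linear_combination - h5
  · rintro (rfl | rfl)
    · refine ⟨?_, ?_, ?_, ?_, Or.inl (by ring)⟩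
      · exact fun h => aux_cast_ne_zero hm (k := 1) (by norm_num) (by omega) (by push_cast; linear_combination - h)
      · exact fun h => h1 (by linear_combination h)
      · exact fun h => aux_cast_ne_zero hm (k := 1) (by norm_num) (by omega) (by push_cast; linear_combination h)
      · exact fun h => h2 (by linear_combination - h)
    · refine ⟨?_, ?_, ?_, ?_, Or.inr (by ring)⟩
      · exact fun h => h2 (by linear_combination h)
      · exact fun h => aux_cast_ne_zero hm (k := 1) (by norm_num) (by omega) (by push_cast; linear_combination - h)
      · exact fun h => h1 (by linear_combination - h)
      · exact fun h => aux_cast_ne_zero hm (k := 1) (by norm_num) (by omega) (by push_cast; linear_combination h)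

end Aux2
section Aux3
variable {m : ℕ}

lemma aux_val_add_one [NeZero m] (hm : 5 ≤ m) (u : ZMod m) (h : u.val + 1 < m) :
    (u + 1).val = u.val + 1 := by
  rw [ZMod.val_add, aux_val_one hm, Nat.mod_eq_of_lt h]

lemma aux_val_add_two [NeZero m] (hm : 5 ≤ m) (u : ZMod m) (h : u.val + 2 < m) :
    (u + 2).val = u.val + 2 := by
  rw [ZMod.val_add, aux_val_two hm, Nat.mod_eq_of_lt h]

lemma aux_nonear (hm : 5 ≤ m) {a b : ZMod m} (hab : a ≠ b) (h1 : a - b ≠ 1) (h2 : b - a ≠ 1)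
    (hne : ∀ c, ({a,b} : Finset (ZMod m)) ≠ auxEar c) :
    ∃ g h : Finset (ZMod m), PIsDiag m g ∧ PIsDiag m h ∧
      PCross m {a,b} g ∧ PCross m {a,b} h ∧ PCross m g h := by
  haveI : NeZero m := ⟨by omega⟩
  set k := (b - a).val with hkdef
  have hba : b - a ≠ 0 := sub_ne_zero.mpr (Ne.symm hab)
  have hk0 : k ≠ 0 := fun h => hba ((ZMod.val_eq_zero _).mp h)
  have hk1 : k ≠ 1 := fun h => h2 (ZMod.val_injective m (by rw [← hkdef, h, aux_val_one hm]))
  have hvab : (a - b).val = m - k := by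
    rw [show a - b = -(b - a) by ring, ZMod.neg_val, if_neg hba]
  have hkm1 : k ≠ m - 1 := by
    intro h
    apply h1
    apply ZMod.val_injective m
    rw [hvab, aux_val_one hm, h]
    omega
  have hk2 : k ≠ 2 := by
    intro h
    apply hne a
    have hb : b - a = 2 := ZMod.val_injective m (by rw [← hkdef, h, aux_val_two hm])
    have hb2 : b = a + 2 := by linear_combination hb
    rw [hb2]; rfl
  have hkm2 : k ≠ m - 2 := by
    intro h
    apply hne b
    have ha : a - b = 2 := by
      apply ZMod.val_injective m
      rw [hvab, aux_val_two hm, h]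
      omega
    have ha2 : a = b + 2 := by linear_combination ha
    rw [ha2, Finset.pair_comm]; rfl
  have hklt : k < m := ZMod.val_lt _
  have hk3 : 3 ≤ k ∧ k + 3 ≤ m := by omega
  -- val table
  have w1 : ((b - a) + 1).val = k + 1 := aux_val_add_one hm _ (by omega)
  have w2 : ((b - a) + 2).val = k + 2 := aux_val_add_two hm _ (by omega)
  -- between facts
  have P1 : Pbetween m a (a+1) b := by
    unfold Pbetween
    rw [show a+1-a = (1 : ZMod m) by ring, aux_val_one hm, ← hkdef]
    omega
  have P2 : ¬ Pbetween m a (b+1) b := by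
    unfold Pbetween
    rw [show b+1-a = (b-a)+1 by ring, w1, ← hkdef]
    omega
  have P3 : Pbetween m a (a+2) b := by
    unfold Pbetween
    rw [show a+2-a = (2 : ZMod m) by ring, aux_val_two hm, ← hkdef]
    omega
  have P4 : ¬ Pbetween m a (b+2) b := by
    unfold Pbetween
    rw [show b+2-a = (b-a)+2 by ring, w2, ← hkdef]
    omega
  have P5 : Pbetween m (a+1) (a+2) (b+1) := by
    unfold Pbetween
    rw [show a+2-(a+1) = (1 : ZMod m) by ring, show b+1-(a+1) = b-a by ring,
      aux_val_one hm, ← hkdef]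
    omega
  have P6 : ¬ Pbetween m (a+1) (b+2) (b+1) := by
    unfold Pbetween
    rw [show b+2-(a+1) = (b-a)+1 by ring, show b+1-(a+1) = b-a by ring, w1, ← hkdef]
    omega
  -- distinctness facts
  have na1 : a ≠ a + 1 := fun h =>
    aux_cast_ne_zero hm (k := 1) (by norm_num) (by omega) (by push_cast; linear_combination - h)
  have na2 : a ≠ a + 2 := fun h =>
    aux_cast_ne_zero hm (k := 2) (by norm_num) (by omega) (by push_cast; linear_combination - h)
  have nb1 : b ≠ b + 1 := fun h =>
    aux_cast_ne_zero hm (k := 1) (by norm_num) (by omega) (by push_cast; linear_combination - h)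
  have nb2 : b ≠ b + 2 := fun h =>
    aux_cast_ne_zero hm (k := 2) (by norm_num) (by omega) (by push_cast; linear_combination - h)
  have nab1 : a ≠ b + 1 := fun h => h1 (by linear_combination h)
  have nba1 : b ≠ a + 1 := fun h => h2 (by linear_combination h)
  have nab2 : a ≠ b + 2 := by
    intro h
    have ha : a - b = 2 := by linear_combination h
    have := congrArg ZMod.val ha
    rw [hvab, aux_val_two hm] at this
    omega
  have nba2 : b ≠ a + 2 := by
    intro h
    have hb : b - a = 2 := by linear_combination h
    have := congrArg ZMod.val hb
    rw [← hkdef, aux_val_two hm] at this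
    omega
  have np1 : a + 1 ≠ b + 1 := fun h => hab (by linear_combination h)
  have np2 : a + 2 ≠ b + 2 := fun h => hab (by linear_combination h)
  have nq1 : a + 1 ≠ a + 2 := fun h =>
    aux_cast_ne_zero hm (k := 1) (by norm_num) (by omega) (by push_cast; linear_combination - h)
  have nq2 : b + 1 ≠ b + 2 := fun h =>
    aux_cast_ne_zero hm (k := 1) (by norm_num) (by omega) (by push_cast; linear_combination - h)
  have nq3 : a + 1 ≠ b + 2 := fun h => h1 (by linear_combination h)
  have nq4 : b + 1 ≠ a + 2 := fun h => h2 (by linear_combination h)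
  refine ⟨{a+1, b+1}, {a+2, b+2}, ?_, ?_, ?_, ?_, ?_⟩
  · exact ⟨a+1, b+1, rfl, np1, fun h => h1 (by linear_combination h),
      fun h => h2 (by linear_combination h)⟩
  · exact ⟨a+2, b+2, rfl, np2, fun h => h1 (by linear_combination h),
      fun h => h2 (by linear_combination h)⟩
  · exact (aux_cross_iff hm hab np1).mpr ⟨na1, nab1, nba1, nb1, Or.inl ⟨P1, P2⟩⟩
  · exact (aux_cross_iff hm hab np2).mpr ⟨na2, nab2, nba2, nb2, Or.inl ⟨P3, P4⟩⟩
  · exact (aux_cross_iff hm np1 np2).mpr ⟨nq1, nq3, nq4, nq2, Or.inl ⟨P5, P6⟩⟩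

lemma aux_ear_indep (hm : 5 ≤ m) (c : ZMod m) {g h : Finset (ZMod m)}
    (hg : PIsDiag m g) (hh : PIsDiag m h)
    (cg : PCross m (auxEar c) g) (ch : PCross m (auxEar c) h) : ¬ PCross m g h := by
  obtain ⟨x, y, rfl, hxy, _, _⟩ := hg
  obtain ⟨z, w, rfl, hzw, _, _⟩ := hh
  rw [aux_ear_cross hm hxy] at cg
  rw [aux_ear_cross hm hzw] at ch
  intro hcr
  obtain ⟨d1, d2, d3, d4, _⟩ := (aux_cross_iff hm hxy hzw).mp hcr
  rcases cg.2.2.2.2 with e | e <;> rcases ch.2.2.2.2 with f | f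
  · exact d1 (e.trans f.symm)
  · exact d2 (e.trans f.symm)
  · exact d3 (e.trans f.symm)
  · exact d4 (e.trans f.symm)

lemma aux_isEar_iff (hm : 5 ≤ m) {d : Finset (ZMod m)} (hd : PIsDiag m d) :
    (∃ c, d = auxEar c) ↔
      ∀ g h : Finset (ZMod m), PIsDiag m g → PIsDiag m h →
        PCross m d g → PCross m d h → ¬ PCross m g h := by
  constructor
  · rintro ⟨c, rfl⟩ g h hg hh cg ch
    exact aux_ear_indep hm c hg hh cg ch
  · intro H
    by_contra hne
    push_neg at hne
    obtain ⟨a, b, rfl, hab, h1, h2⟩ := hd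
    obtain ⟨g, h, hg, hh, c1, c2, c3⟩ := aux_nonear hm hab h1 h2 hne
    exact H g h hg hh c1 c2 c3

end Aux3
/-- Every bijection of the set of diagonals of a convex `m`-gon (`m ≥ 5`) preserving the
crossing relation in both directions is induced by a dihedral symmetry `x ↦ ε x + c`
(`ε = ±1`) acting on endpoints. -/
theorem stmt_3 (m : ℕ) (hm : 5 ≤ m)
    (f : {d : Finset (ZMod m) // PIsDiag m d} ≃ {d : Finset (ZMod m) // PIsDiag m d})
    (hf : ∀ d e, PCross m d.1 e.1 ↔ PCross m (f d).1 (f e).1) :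
    ∃ ε c : ZMod m, (ε = 1 ∨ ε = -1) ∧
      ∀ (d : {d : Finset (ZMod m) // PIsDiag m d}) (a b : ZMod m),
        d.1 = {a, b} → (f d).1 = {ε * a + c, ε * b + c} := by
  haveI : NeZero m := ⟨by omega⟩
  let E : ZMod m → {d : Finset (ZMod m) // PIsDiag m d} :=
    fun c => ⟨auxEar c, aux_ear_diag hm c⟩
  have hf' : ∀ d e : {d : Finset (ZMod m) // PIsDiag m d}, PCross m (f.symm d).1 (f.symm e).1 ↔ PCross m d.1 e.1 := by
    intro d e
    have := hf (f.symm d) (f.symm e)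
    simpa using this
  -- f maps ears to ears
  have earf : ∀ c : ZMod m, ∃ c', (f (E c)).1 = auxEar c' := by
    intro c
    apply (aux_isEar_iff hm (f (E c)).2).mpr
    intro g h hg hh cg ch
    have e1 : PCross m (auxEar c) (f.symm ⟨g, hg⟩).1 := by
      have : PCross m (E c).1 (f.symm ⟨g, hg⟩).1 := by
        rw [hf (E c) (f.symm ⟨g, hg⟩)]
        simpa using cg
      exact this
    have e2 : PCross m (auxEar c) (f.symm ⟨h, hh⟩).1 := by
      have : PCross m (E c).1 (f.symm ⟨h, hh⟩).1 := by
        rw [hf (E c) (f.symm ⟨h, hh⟩)]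
        simpa using ch
      exact this
    intro cgh
    have cgh' : PCross m (f.symm ⟨g, hg⟩).1 (f.symm ⟨h, hh⟩).1 :=
      (hf' ⟨g, hg⟩ ⟨h, hh⟩).mpr cgh
    exact aux_ear_indep hm c (f.symm ⟨g, hg⟩).2 (f.symm ⟨h, hh⟩).2 e1 e2 cgh'
  choose g hg using earf
  -- adjacency
  have adj : ∀ c : ZMod m, g (c+1) = g c + 1 ∨ g (c+1) = g c - 1 := by
    intro c
    have h0 : PCross m (E c).1 (E (c+1)).1 :=
      (aux_ear_cross_ear hm c (c+1)).mpr (Or.inl rfl)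
    have h1 := (hf (E c) (E (c+1))).mp h0
    rw [hg c, hg (c+1)] at h1
    exact (aux_ear_cross_ear hm _ _).mp h1
  have ginj : Function.Injective g := by
    intro c c' h
    have h2 : f (E c) = f (E c') := Subtype.ext (by rw [hg c, hg c', h])
    have h3 := f.injective h2
    have h4 : auxEar c = auxEar (m := m) c' := congrArg Subtype.val h3
    exact aux_ear_unique hm h4
  set ε := g 1 - g 0 with hεdef
  have hε : ε = 1 ∨ ε = -1 := by
    have h0 := adj 0
    rw [zero_add] at h0
    rcases h0 with h | h
    · left; rw [hεdef]; linear_combination h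
    · right; rw [hεdef]; linear_combination h
  have key : ∀ n : ℕ, g ((n : ZMod m)) = ε * n + g 0 ∧
      g ((n : ZMod m) + 1) = ε * ((n : ZMod m) + 1) + g 0 := by
    intro n
    induction n with
    | zero =>
      constructor
      · push_cast; simp
      · push_cast
        rw [zero_add, hεdef]; ring
    | succ n ih =>
      obtain ⟨ih1, ih2⟩ := ih
      have cast1 : ((n + 1 : ℕ) : ZMod m) = (n : ZMod m) + 1 := by push_cast; ring
      refine ⟨by rw [cast1]; exact ih2, ?_⟩
      rw [cast1]
      rcases adj ((n : ZMod m) + 1) with h | h <;> rcases hε with e | e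
      · rw [h, ih2, e]; ring
      · exfalso
        have hgg : g ((n : ZMod m) + 1 + 1) = g ((n : ZMod m)) := by
          rw [h, ih2, ih1, e]; ring
        have h2' := ginj hgg
        exact aux_cast_ne_zero hm (k := 2) (by norm_num) (by omega)
          (by push_cast; linear_combination h2')
      · exfalso
        have hgg : g ((n : ZMod m) + 1 + 1) = g ((n : ZMod m)) := by
          rw [h, ih2, ih1, e]; ring
        have h2' := ginj hgg
        exact aux_cast_ne_zero hm (k := 2) (by norm_num) (by omega)
          (by push_cast; linear_combination h2')
      · rw [h, ih2, e]; ring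
  have gform : ∀ x : ZMod m, g x = ε * x + g 0 := by
    intro x
    have hx : ((x.val : ℕ) : ZMod m) = x := ZMod.natCast_rightInverse x
    have := (key x.val).1
    rwa [hx] at this
  refine ⟨ε, g 0 - ε + 1, hε, ?_⟩
  intro d a b hd
  obtain ⟨a0, b0, hd0, hab0, h10, h20⟩ := d.2
  obtain ⟨a', b', hfd, hab', h1', h2'⟩ := (f d).2
  have c1 : PCross m (auxEar (a0 - 1)) d.1 := by
    rw [hd0]
    exact (aux_diag_cross_ear hm hab0 h10 h20 _).mpr (Or.inl rfl)
  have c2 : PCross m (auxEar (b0 - 1)) d.1 := by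
    rw [hd0]
    exact (aux_diag_cross_ear hm hab0 h10 h20 _).mpr (Or.inr rfl)
  have t1 : PCross m (auxEar (g (a0 - 1))) (f d).1 := by
    have h5 : PCross m (E (a0 - 1)).1 d.1 := c1
    have := (hf (E (a0 - 1)) d).mp h5
    rwa [hg (a0 - 1)] at this
  have t2 : PCross m (auxEar (g (b0 - 1))) (f d).1 := by
    have h5 : PCross m (E (b0 - 1)).1 d.1 := c2
    have := (hf (E (b0 - 1)) d).mp h5
    rwa [hg (b0 - 1)] at this
  rw [hfd] at t1 t2
  have m1 := (aux_diag_cross_ear hm hab' h1' h2' _).mp t1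
  have m2 := (aux_diag_cross_ear hm hab' h1' h2' _).mp t2
  have gne : g (a0 - 1) ≠ g (b0 - 1) := by
    intro h
    have := ginj h
    exact hab0 (by linear_combination this)
  have gf1 : g (a0 - 1) = ε * (a0 - 1) + g 0 := gform _
  have gf2 : g (b0 - 1) = ε * (b0 - 1) + g 0 := gform _
  have hset : (f d).1 = {ε * a0 + (g 0 - ε + 1), ε * b0 + (g 0 - ε + 1)} := by
    rcases m1 with e1 | e1 <;> rcases m2 with e2 | e2
    · exact absurd (e1.trans e2.symm) gne
    · rw [hfd]
      congr 1
      · linear_combination gf1 - e1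
      · congr 1
        linear_combination gf2 - e2
    · rw [hfd, Finset.pair_comm]
      congr 1
      · linear_combination gf1 - e1
      · congr 1
        linear_combination gf2 - e2
    · exact absurd (e1.trans e2.symm) gne
  rcases aux_pairEq hab0 (hd0.symm.trans hd) with ⟨e1, e2⟩ | ⟨e1, e2⟩
  · rw [hset, e1, e2]
  · rw [hset, e1, e2, Finset.pair_comm]
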